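/- A point U ∈ 𝒞(P,Q) is a vertex (extreme point) if and only if the bipartite graph G_U with left nodes {1,…,n}, right nodes {1,…,m}, and edges {(i,j) : U(i,j) > 0} contains no cycle (is a forest). -/

import Mathlib

open Finset Filter Topology

def IsProbVec {n : ℕ} (P : Fin n → ℝ) : Prop :=
  (∀ i, 0 ≤ P i) ∧ ∑ i, P i = 1

def supp {α : Type*} (P : α → ℝ) : Set α := {i | 0 < P i}

def supp2 {n m : ℕ} (S : Fin n → Fin m → ℝ) : Set (Fin n × Fin m) :=
  {p | 0 < S p.1 p.2}

def Coupling {n m : ℕ} (P : Fin n → ℝ) (Q : Fin m → ℝ) : Set (Fin n → Fin m → ℝ) :=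
  {S | (∀ i j, 0 ≤ S i j) ∧ (∀ i, ∑ j, S i j = P i) ∧ (∀ j, ∑ i, S i j = Q j)}

/-- Kullback-Leibler divergence of bivariate distributions, as a real-valued sum
(valid, with the convention `0 log 0 = 0`, whenever `supp2 T ⊆ supp2 S`). -/
noncomputable def D2 {n m : ℕ} (T S : Fin n → Fin m → ℝ) : ℝ :=
  ∑ i, ∑ j, T i j * Real.log (T i j / S i j)

/-- `T'` is an I-projection of `S` onto `𝒯`: it is absolutely continuous w.r.t. `S`
(equivalently, `D(T'‖S) < ∞`) and minimizes the divergence among all such elements of `𝒯`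
(elements with `¬ supp2 T ⊆ supp2 S` have infinite divergence). -/
def IsIProj {n m : ℕ} (S : Fin n → Fin m → ℝ) (𝒯 : Set (Fin n → Fin m → ℝ))
    (T' : Fin n → Fin m → ℝ) : Prop :=
  T' ∈ 𝒯 ∧ supp2 T' ⊆ supp2 S ∧ ∀ T ∈ 𝒯, supp2 T ⊆ supp2 S → D2 T' S ≤ D2 T S

noncomputable def prodDist {n m : ℕ} (P : Fin n → ℝ) (Q : Fin m → ℝ) :
    Fin n → Fin m → ℝ := fun i j => P i * Q j

/-- KL divergence of univariate distributions. -/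
noncomputable def Dv {n : ℕ} (P Q : Fin n → ℝ) : ℝ :=
  ∑ i, P i * Real.log (P i / Q i)

def GeomEquiv {n m : ℕ} (C1 C2 : Set (Fin n → Fin m → ℝ)) : Prop :=
  (∀ S ∈ C1, ∃ T ∈ C2, supp2 T = supp2 S) ∧ (∀ T ∈ C2, ∃ S ∈ C1, supp2 S = supp2 T)

/-- The bipartite graph on `Fin n ⊕ Fin m` with edge set `E ⊆ Fin n × Fin m`. -/
def bipGraph {n m : ℕ} (E : Set (Fin n × Fin m)) : SimpleGraph (Fin n ⊕ Fin m) where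
  Adj u v := ∃ i j, (i, j) ∈ E ∧
    ((u = Sum.inl i ∧ v = Sum.inr j) ∨ (u = Sum.inr j ∧ v = Sum.inl i))
  symm := by
    constructor
    rintro u v ⟨i, j, hE, h | h⟩
    · exact ⟨i, j, hE, Or.inr ⟨h.2, h.1⟩⟩
    · exact ⟨i, j, hE, Or.inl ⟨h.2, h.1⟩⟩
  loopless := by
    constructor
    rintro u ⟨i, j, hE, ⟨h1, h2⟩ | ⟨h1, h2⟩⟩ <;> simp_all

open Sum

lemma bipAdj {n m : ℕ} {E : Set (Fin n × Fin m)} {i : Fin n} {j : Fin m} :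
    (bipGraph E).Adj (inl i) (inr j) ↔ (i, j) ∈ E := by
  constructor
  · rintro ⟨i', j', hE, ⟨h1, h2⟩ | ⟨h1, h2⟩⟩ <;> simp_all
  · intro h; exact ⟨i, j, h, Or.inl ⟨rfl, rfl⟩⟩


/-! ### counting function -/

def cnt {α : Type*} [DecidableEq α] (a : α) : List α → ℕ
  | [] => 0
  | b :: t => cnt a t + if b = a then 1 else 0

@[simp] lemma cnt_nil {α : Type*} [DecidableEq α] (a : α) : cnt a ([] : List α) = 0 := rfl

@[simp] lemma cnt_cons {α : Type*} [DecidableEq α] (a b : α) (t : List α) :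
    cnt a (b :: t) = cnt a t + if b = a then 1 else 0 := rfl

lemma cnt_append {α : Type*} [DecidableEq α] (a : α) (l1 l2 : List α) :
    cnt a (l1 ++ l2) = cnt a l1 + cnt a l2 := by
  induction l1 with
  | nil => simp
  | cons b t ih => simp [ih]; ring

lemma cnt_eq_zero_of_not_mem {α : Type*} [DecidableEq α] {a : α} {l : List α} (h : a ∉ l) :
    cnt a l = 0 := by
  induction l with
  | nil => simp
  | cons b t ih =>
    simp only [List.mem_cons, not_or] at h
    simp [ih h.2, Ne.symm h.1]

lemma cnt_pos_of_mem {α : Type*} [DecidableEq α] {a : α} {l : List α} (h : a ∈ l) :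
    0 < cnt a l := by
  induction l with
  | nil => simp at h
  | cons b t ih =>
    rcases List.mem_cons.mp h with rfl | h'
    · simp
    · have := ih h'; simp; omega

lemma mem_of_cnt_pos {α : Type*} [DecidableEq α] {a : α} {l : List α} (h : 0 < cnt a l) :
    a ∈ l := by
  by_contra hm
  rw [cnt_eq_zero_of_not_mem hm] at h
  exact lt_irrefl 0 h

lemma cnt_le_one_of_nodup {α : Type*} [DecidableEq α] {l : List α} (h : l.Nodup) (a : α) :
    cnt a l ≤ 1 := by
  induction l with
  | nil => simp
  | cons b t ih =>
    rw [List.nodup_cons] at h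
    by_cases hba : b = a
    · subst hba
      simp [cnt_eq_zero_of_not_mem h.1]
    · simp [hba]
      exact ih h.2

lemma cnt_map_sym2 {α : Type*} [DecidableEq α] (u w : α) (huw : u ≠ w)
    (l : List (α × α)) :
    cnt (u, w) l + cnt (w, u) l ≤ cnt s(u, w) (l.map (Function.uncurry Sym2.mk)) := by
  induction l with
  | nil => simp
  | cons p t ih =>
    simp only [cnt_cons, List.map_cons]
    have key : ((if p = (u, w) then 1 else 0) + (if p = (w, u) then 1 else 0) : ℕ)
        ≤ if Function.uncurry Sym2.mk p = s(u, w) then 1 else 0 := by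
      by_cases h1 : p = (u, w)
      · subst h1
        simp [Prod.ext_iff, huw, Ne.symm huw]
      · by_cases h2 : p = (w, u)
        · subst h2
          simp [Sym2.mk_eq_mk_iff, Prod.ext_iff, huw, Ne.symm huw]
        · simp [h1, h2]
    omega

lemma cnt_dropLast_closed {α : Type*} [DecidableEq α] (t : List α) (v a : α) (ht : t ≠ [])
    (hlast : t.getLast ht = v) :
    cnt a ((v :: t).dropLast) = cnt a t.dropLast + if v = a then 1 else 0 := by
  rw [List.dropLast_cons_of_ne_nil ht]
  simp [cnt_cons]

lemma cnt_head_last {α : Type*} [DecidableEq α] (t : List α) (v a : α) (ht : t ≠ [])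
    (hlast : t.getLast ht = v) :
    cnt a ((v :: t).dropLast) = cnt a t := by
  rw [cnt_dropLast_closed t v a ht hlast]
  conv_rhs => rw [← List.dropLast_append_getLast ht]
  rw [cnt_append, hlast]
  simp

/-! ### bipartite shape counting -/

section Bip
variable {n m : ℕ}

abbrev Vb (n m : ℕ) := Fin n ⊕ Fin m

def Good {n m : ℕ} (p : Vb n m × Vb n m) : Prop :=
  (∃ i j, p = (inl i, inr j)) ∨ (∃ i j, p = (inr j, inl i))

lemma countL1 (l : List (Vb n m × Vb n m)) (hl : ∀ p ∈ l, Good p) (i : Fin n) :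
    ∑ j, cnt ((inl i, inr j) : Vb n m × Vb n m) l = cnt (inl i) (l.map Prod.fst) := by
  induction l with
  | nil => simp
  | cons p t ih =>
    have hp := hl p List.mem_cons_self
    have ih' := ih (fun q hq => hl q (List.mem_cons_of_mem p hq))
    simp only [cnt_cons, List.map_cons, Finset.sum_add_distrib, ih']
    congr 1
    rcases hp with ⟨i', j', rfl⟩ | ⟨i', j', rfl⟩
    · by_cases h : i' = i
      · subst h; simp [Prod.ext_iff]
      · simp [Prod.ext_iff, h]
    · simp

lemma countL2 (l : List (Vb n m × Vb n m)) (hl : ∀ p ∈ l, Good p) (i : Fin n) :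
    ∑ j, cnt ((inr j, inl i) : Vb n m × Vb n m) l = cnt (inl i) (l.map Prod.snd) := by
  induction l with
  | nil => simp
  | cons p t ih =>
    have hp := hl p List.mem_cons_self
    have ih' := ih (fun q hq => hl q (List.mem_cons_of_mem p hq))
    simp only [cnt_cons, List.map_cons, Finset.sum_add_distrib, ih']
    congr 1
    rcases hp with ⟨i', j', rfl⟩ | ⟨i', j', rfl⟩
    · simp
    · by_cases h : i' = i
      · subst h; simp [Prod.ext_iff]
      · simp [Prod.ext_iff, h]

lemma countL3 (l : List (Vb n m × Vb n m)) (hl : ∀ p ∈ l, Good p) (j : Fin m) :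
    ∑ i, cnt ((inl i, inr j) : Vb n m × Vb n m) l = cnt (inr j) (l.map Prod.snd) := by
  induction l with
  | nil => simp
  | cons p t ih =>
    have hp := hl p List.mem_cons_self
    have ih' := ih (fun q hq => hl q (List.mem_cons_of_mem p hq))
    simp only [cnt_cons, List.map_cons, Finset.sum_add_distrib, ih']
    congr 1
    rcases hp with ⟨i', j', rfl⟩ | ⟨i', j', rfl⟩
    · by_cases h : j' = j
      · subst h; simp [Prod.ext_iff]
      · simp [Prod.ext_iff, h]
    · simp

lemma countL4 (l : List (Vb n m × Vb n m)) (hl : ∀ p ∈ l, Good p) (j : Fin m) :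
    ∑ i, cnt ((inr j, inl i) : Vb n m × Vb n m) l = cnt (inr j) (l.map Prod.fst) := by
  induction l with
  | nil => simp
  | cons p t ih =>
    have hp := hl p List.mem_cons_self
    have ih' := ih (fun q hq => hl q (List.mem_cons_of_mem p hq))
    simp only [cnt_cons, List.map_cons, Finset.sum_add_distrib, ih']
    congr 1
    rcases hp with ⟨i', j', rfl⟩ | ⟨i', j', rfl⟩
    · simp
    · by_cases h : j' = j
      · subst h; simp [Prod.ext_iff]
      · simp [Prod.ext_iff, h]

end Bip

/-! ### perturbation from a cycle -/

lemma exists_Z {n m : ℕ} (U : Fin n → Fin m → ℝ)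
    (hcyc : ¬ (bipGraph (supp2 U)).IsAcyclic) :
    ∃ Z : Fin n → Fin m → ℝ,
      (∀ i, ∑ j, Z i j = 0) ∧ (∀ j, ∑ i, Z i j = 0) ∧
      (∀ i j, Z i j ≠ 0 → 0 < U i j) ∧ (∃ i j, Z i j ≠ 0) := by
  classical
  rw [SimpleGraph.IsAcyclic] at hcyc
  push_neg at hcyc
  obtain ⟨v, c, hc⟩ := hcyc
  set L : List (Vb n m × Vb n m) := c.darts.map SimpleGraph.Dart.toProd with hL
  have hshape : ∀ p ∈ L, (∃ i j, p = (inl i, inr j) ∧ (i, j) ∈ supp2 U) ∨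
      (∃ i j, p = (inr j, inl i) ∧ (i, j) ∈ supp2 U) := by
    intro p hp
    obtain ⟨d, hd, rfl⟩ := List.mem_map.mp hp
    obtain ⟨i, j, hE, h | h⟩ := d.adj
    · exact Or.inl ⟨i, j, Prod.ext h.1 h.2, hE⟩
    · exact Or.inr ⟨i, j, Prod.ext h.1 h.2, hE⟩
  have hgood : ∀ p ∈ L, Good p := by
    intro p hp
    rcases hshape p hp with ⟨i, j, rfl, -⟩ | ⟨i, j, rfl, -⟩
    · exact Or.inl ⟨i, j, rfl⟩
    · exact Or.inr ⟨i, j, rfl⟩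
  set Z : Fin n → Fin m → ℝ :=
    fun i j => (cnt ((inl i, inr j) : Vb n m × Vb n m) L : ℝ)
      - (cnt ((inr j, inl i) : Vb n m × Vb n m) L : ℝ) with hZ
  have hfst : L.map Prod.fst = c.support.dropLast := by
    rw [hL, List.map_map]; exact c.map_fst_darts
  have hsnd : L.map Prod.snd = c.support.tail := by
    rw [hL, List.map_map]; exact c.map_snd_darts
  have hlen3 := hc.three_le_length
  have hsupl := c.length_support
  have ht : c.support.tail ≠ [] := by
    intro h
    have := congr_arg List.length h
    rw [List.length_tail, hsupl] at this
    simp only [List.length_nil] at this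
    omega
  have hcount_eq : ∀ a, cnt a (L.map Prod.fst) = cnt a (L.map Prod.snd) := by
    intro a
    rw [hfst, hsnd]
    have hlast : c.support.tail.getLast ht = v := by
      rw [List.getLast_tail]
      exact c.getLast_support
    calc cnt a c.support.dropLast = cnt a ((v :: c.support.tail).dropLast) := by
          rw [← c.support_eq_cons]
      _ = cnt a c.support.tail := cnt_head_last _ v a ht hlast
  have hrow : ∀ i, ∑ j, Z i j = 0 := by
    intro i
    rw [hZ]
    rw [Finset.sum_sub_distrib, ← Nat.cast_sum, ← Nat.cast_sum,
      countL1 L hgood i, countL2 L hgood i, hcount_eq (inl i), sub_self]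
  have hcol : ∀ j, ∑ i, Z i j = 0 := by
    intro j
    rw [hZ]
    rw [Finset.sum_sub_distrib, ← Nat.cast_sum, ← Nat.cast_sum,
      countL3 L hgood j, countL4 L hgood j, hcount_eq (inr j), sub_self]
  have hZsupp : ∀ i j, Z i j ≠ 0 → 0 < U i j := by
    intro i j h
    have : 0 < cnt ((inl i, inr j) : Vb n m × Vb n m) L ∨
        0 < cnt ((inr j, inl i) : Vb n m × Vb n m) L := by
      by_contra hcon
      push_neg at hcon
      rw [hZ] at h
      simp only [Nat.le_zero] at hcon
      simp [hcon.1, hcon.2] at h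
    rcases this with hpos | hpos
    · rcases hshape _ (mem_of_cnt_pos hpos) with ⟨i', j', he, hs⟩ | ⟨i', j', he, hs⟩
      · simp only [Prod.mk.injEq, inl.injEq, inr.injEq] at he
        obtain ⟨rfl, rfl⟩ := he
        exact hs
      · simp [Prod.ext_iff] at he
    · rcases hshape _ (mem_of_cnt_pos hpos) with ⟨i', j', he, hs⟩ | ⟨i', j', he, hs⟩
      · simp [Prod.ext_iff] at he
      · simp only [Prod.mk.injEq, inl.injEq, inr.injEq] at he
        obtain ⟨rfl, rfl⟩ := he
        exact hs
  refine ⟨Z, hrow, hcol, hZsupp, ?_⟩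
  -- nonzero entry from the first dart
  have hdne : c.darts ≠ [] := by
    intro h
    have := c.length_darts
    rw [h] at this
    simp only [List.length_nil] at this
    omega
  have hd0 : (c.darts.head hdne).toProd ∈ L := by
    rw [hL]
    exact List.mem_map_of_mem (List.head_mem hdne)
  have hnodup : c.edges.Nodup := hc.edges_nodup
  have hedges : c.edges = L.map (Function.uncurry Sym2.mk) := by
    rw [hL, List.map_map]
    rfl
  obtain ⟨i0, j0, hp0, -⟩ | ⟨i0, j0, hp0, -⟩ := hshape _ hd0
  · refine ⟨i0, j0, ?_⟩
    have h1 : 0 < cnt ((inl i0, inr j0) : Vb n m × Vb n m) L :=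
      cnt_pos_of_mem (hp0 ▸ hd0)
    have h2 : cnt ((inl i0, inr j0) : Vb n m × Vb n m) L
        + cnt ((inr j0, inl i0) : Vb n m × Vb n m) L ≤ 1 := by
      refine le_trans (cnt_map_sym2 _ _ (by simp) L) ?_
      rw [← hedges]
      exact cnt_le_one_of_nodup hnodup _
    have e1 : cnt ((inl i0, inr j0) : Vb n m × Vb n m) L = 1 := by omega
    have e2 : cnt ((inr j0, inl i0) : Vb n m × Vb n m) L = 0 := by omega
    rw [hZ]
    simp [e1, e2]
  · refine ⟨i0, j0, ?_⟩
    have h1 : 0 < cnt ((inr j0, inl i0) : Vb n m × Vb n m) L :=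
      cnt_pos_of_mem (hp0 ▸ hd0)
    have h2 : cnt ((inr j0, inl i0) : Vb n m × Vb n m) L
        + cnt ((inl i0, inr j0) : Vb n m × Vb n m) L ≤ 1 := by
      refine le_trans (cnt_map_sym2 _ _ (by simp) L) ?_
      rw [← hedges]
      have : s((inr j0 : Vb n m), (inl i0 : Vb n m)) = s((inl i0 : Vb n m), (inr j0 : Vb n m)) := Sym2.eq_swap
      rw [this]
      exact cnt_le_one_of_nodup hnodup _
    have e1 : cnt ((inr j0, inl i0) : Vb n m × Vb n m) L = 1 := by omega
    have e2 : cnt ((inl i0, inr j0) : Vb n m × Vb n m) L = 0 := by omega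
    rw [hZ]
    simp [e1, e2]

lemma key_zero {n m : ℕ} {U D : Fin n → Fin m → ℝ}
    (hac : (bipGraph (supp2 U)).IsAcyclic)
    (hsupp : ∀ i j, D i j ≠ 0 → 0 < U i j)
    (hrow : ∀ i, ∑ j, D i j = 0) (hcol : ∀ j, ∑ i, D i j = 0) :
    ∀ i j, D i j = 0 := by
  classical
  set G := bipGraph (supp2 U) with hG
  intro i j
  by_contra hne
  have hadj : G.Adj (inl i) (inr j) := bipAdj.mpr (hsupp i j hne)
  have hbr := (SimpleGraph.isAcyclic_iff_forall_adj_isBridge.mp hac hadj)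
  have hnr : ¬(G \ SimpleGraph.fromEdgeSet {s(inl i, inr j)}).Reachable (inl i) (inr j) :=
    (SimpleGraph.isBridge_iff.mp hbr)
  set G' := G \ SimpleGraph.fromEdgeSet {s(inl i, inr j)} with hG'
  set R : (Fin n ⊕ Fin m) → Prop := fun v => G'.Reachable (inl i) v with hR
  have S1 : ∑ i', ∑ j', (if R (inl i') then D i' j' else 0) = 0 := by
    apply Finset.sum_eq_zero; intro i' _
    by_cases h : R (inl i') <;> simp [h, hrow i']
  have S2 : ∑ i', ∑ j', (if R (inr j') then D i' j' else 0) = 0 := by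
    rw [Finset.sum_comm]
    apply Finset.sum_eq_zero; intro j' _
    by_cases h : R (inr j') <;> simp [h, hcol j']
  have main : ∑ p : Fin n × Fin m,
      ((if R (inl p.1) then D p.1 p.2 else 0) - (if R (inr p.2) then D p.1 p.2 else 0)) = D i j := by
    rw [Finset.sum_eq_single (i, j)]
    · have h1 : R (inl i) := SimpleGraph.Reachable.refl _
      have h2 : ¬ R (inr j) := hnr
      simp [h1, h2]
    · rintro ⟨i', j'⟩ _ hp
      by_cases hD : D i' j' = 0
      · simp [hD]
      · have hadj' : G.Adj (inl i') (inr j') := bipAdj.mpr (hsupp i' j' hD)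
        have hedge : s(Sum.inl i', (Sum.inr j' : Fin n ⊕ Fin m)) ≠ s(Sum.inl i, Sum.inr j) := by
          intro h
          rw [Sym2.eq, Sym2.rel_iff'] at h
          rcases h with h | h
          · apply hp
            simp only [Prod.mk.injEq] at h ⊢
            exact ⟨inl_injective h.1, inr_injective h.2⟩
          · simp [Prod.ext_iff] at h
        have hadj'' : G'.Adj (inl i') (inr j') := by
          rw [hG', SimpleGraph.sdiff_adj]
          refine ⟨hadj', ?_⟩
          rw [SimpleGraph.fromEdgeSet_adj]
          rintro ⟨hmem, -⟩
          exact hedge hmem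
        have hiff : R (inl i') ↔ R (inr j') :=
          ⟨fun h => h.trans hadj''.reachable, fun h => h.trans hadj''.symm.reachable⟩
        rw [if_congr hiff rfl rfl, sub_self]
    · intro h; exact absurd (Finset.mem_univ _) h
  rw [Fintype.sum_prod_type] at main
  simp only [Finset.sum_sub_distrib] at main
  rw [S1, S2, sub_zero] at main
  exact hne main.symm

theorem stmt8 {n m : ℕ} (P : Fin n → ℝ) (Q : Fin m → ℝ)
    (hP : IsProbVec P) (hQ : IsProbVec Q)
    (U : Fin n → Fin m → ℝ) (hU : U ∈ Coupling P Q) :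
    U ∈ (Coupling P Q).extremePoints ℝ ↔ (bipGraph (supp2 U)).IsAcyclic := by
  constructor
  · intro hext
    classical
    by_contra hcyc
    obtain ⟨Z, hrow, hcol, hZsupp, i0, j0, hZne⟩ := exists_Z U hcyc
    set s : Finset (Fin n × Fin m) :=
      Finset.univ.filter (fun p : Fin n × Fin m => Z p.1 p.2 ≠ 0) with hs
    have hsne : s.Nonempty := ⟨(i0, j0), by simp [hs, hZne]⟩
    set ε := s.inf' hsne (fun p => U p.1 p.2 / |Z p.1 p.2|) with hε
    have hεpos : 0 < ε := by
      rw [hε, Finset.lt_inf'_iff]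
      rintro ⟨i, j⟩ hp
      rw [hs, Finset.mem_filter] at hp
      exact div_pos (hZsupp i j hp.2) (abs_pos.mpr hp.2)
    have hbound : ∀ i j, |ε * Z i j| ≤ U i j := by
      intro i j
      by_cases h : Z i j = 0
      · simp [h]
        exact hU.1 i j
      · have hm : (i, j) ∈ s := by simp [hs, h]
        have hle : ε ≤ U i j / |Z i j| := Finset.inf'_le _ hm
        rw [abs_mul, abs_of_pos hεpos]
        calc ε * |Z i j| ≤ (U i j / |Z i j|) * |Z i j| :=
              mul_le_mul_of_nonneg_right hle (abs_nonneg _)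
          _ = U i j := div_mul_cancel₀ _ (abs_ne_zero.mpr h)
    set X : Fin n → Fin m → ℝ := fun i j => U i j + ε * Z i j with hXdef
    set Y : Fin n → Fin m → ℝ := fun i j => U i j - ε * Z i j with hYdef
    have hX : X ∈ Coupling P Q := by
      refine ⟨fun i j => ?_, fun i => ?_, fun j => ?_⟩
      · have := abs_le.mp (hbound i j)
        rw [hXdef]; dsimp only; linarith [this.1]
      · rw [hXdef]; dsimp only
        rw [Finset.sum_add_distrib, hU.2.1 i, ← Finset.mul_sum, hrow i, mul_zero, add_zero]
      · rw [hXdef]; dsimp only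
        rw [Finset.sum_add_distrib, hU.2.2 j, ← Finset.mul_sum, hcol j, mul_zero, add_zero]
    have hY : Y ∈ Coupling P Q := by
      refine ⟨fun i j => ?_, fun i => ?_, fun j => ?_⟩
      · have := abs_le.mp (hbound i j)
        rw [hYdef]; dsimp only; linarith [this.2]
      · rw [hYdef]; dsimp only
        rw [Finset.sum_sub_distrib, hU.2.1 i, ← Finset.mul_sum, hrow i, mul_zero, sub_zero]
      · rw [hYdef]; dsimp only
        rw [Finset.sum_sub_distrib, hU.2.2 j, ← Finset.mul_sum, hcol j, mul_zero, sub_zero]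
    have hseg : U ∈ openSegment ℝ X Y := by
      refine ⟨1/2, 1/2, by norm_num, by norm_num, by norm_num, ?_⟩
      funext i j
      show (1/2 : ℝ) * X i j + (1/2 : ℝ) * Y i j = U i j
      rw [hXdef, hYdef]
      dsimp only
      ring
    obtain ⟨hXU, -⟩ := (mem_extremePoints.mp hext).2 X hX Y hY hseg
    have heq := congr_fun (congr_fun hXU i0) j0
    rw [hXdef] at heq
    dsimp only at heq
    have : ε * Z i0 j0 = 0 := by linarith
    rcases mul_eq_zero.mp this with h | h
    · exact absurd h hεpos.ne'
    · exact hZne h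
  · intro hac
    rw [mem_extremePoints]
    refine ⟨hU, ?_⟩
    intro X hX Y hY hseg
    obtain ⟨a, b, ha, hb, hab, hsum⟩ := hseg
    have hsum' : ∀ i j, a * X i j + b * Y i j = U i j := fun i j => by
      have := congr_fun (congr_fun hsum i) j; simpa using this
    have hXY0 : ∀ i j, ¬ 0 < U i j → X i j = 0 ∧ Y i j = 0 := by
      intro i j h
      have hU0 : U i j = 0 := le_antisymm (not_lt.mp h) (hU.1 i j)
      have h1 : 0 ≤ X i j := hX.1 i j
      have h2 : 0 ≤ Y i j := hY.1 i j
      constructor <;> nlinarith [hsum' i j]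
    have hDz : ∀ i j, X i j - Y i j = 0 := by
      apply key_zero hac (U := U) (D := fun i j => X i j - Y i j)
      · intro i j h
        by_contra h'
        obtain ⟨hx, hy⟩ := hXY0 i j h'
        simp [hx, hy] at h
      · intro i
        rw [Finset.sum_sub_distrib, hX.2.1 i, hY.2.1 i, sub_self]
      · intro j
        rw [Finset.sum_sub_distrib, hX.2.2 j, hY.2.2 j, sub_self]
    have hXY : X = Y := funext fun i => funext fun j => sub_eq_zero.mp (hDz i j)
    have hXU : X = U := by
      funext i j
      have := hsum' i j
      rw [← hXY] at this
      linear_combination this - X i j * hab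
    exact ⟨hXU, hXY ▸ hXU⟩
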